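/- If a channel E on a finite-dimensional system has a repeatable implementation with finite memory (in the sense that some unitary memory model induces E on every use for all input sequences), then E is unital: E(I) = I. -/

import Mathlib

open Matrix Kronecker BigOperators
open scoped ComplexOrder

noncomputable def vnEntropy {n : Type*} [Fintype n] [DecidableEq n] (ρ : Matrix n n ℂ) : ℝ :=
  if h : ρ.IsHermitian then ∑ i, Real.negMulLog (h.eigenvalues i) else 0

def IsDensity {n : Type*} [Fintype n] [DecidableEq n] (ρ : Matrix n n ℂ) : Prop :=
  ρ.PosSemidef ∧ ρ.trace = 1

def IsUnitary {n : Type*} [Fintype n] [DecidableEq n] (U : Matrix n n ℂ) : Prop :=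
  U * Uᴴ = 1 ∧ Uᴴ * U = 1

noncomputable def ptraceMem {μ s : Type*} [Fintype μ] (X : Matrix (μ × s) (μ × s) ℂ) : Matrix s s ℂ :=
  Matrix.of fun i j => ∑ a, X (a, i) (a, j)

noncomputable def ptraceSys {μ s : Type*} [Fintype s] (X : Matrix (μ × s) (μ × s) ℂ) : Matrix μ μ ℂ :=
  Matrix.of fun a b => ∑ i, X (a, i) (b, i)

noncomputable def inducedChan {μ s : Type*} [Fintype μ] [Fintype s]
    (U : Matrix (μ × s) (μ × s) ℂ) (ξ : Matrix μ μ ℂ) (ρ : Matrix s s ℂ) : Matrix s s ℂ :=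
  ptraceMem (U * (ξ ⊗ₖ ρ) * Uᴴ)

noncomputable def memUpdate {μ s : Type*} [Fintype μ] [Fintype s]
    (U : Matrix (μ × s) (μ × s) ℂ) (ξ : Matrix μ μ ℂ) (ρ : Matrix s s ℂ) : Matrix μ μ ℂ :=
  ptraceSys (U * (ξ ⊗ₖ ρ) * Uᴴ)

def ctrlU {μ s : Type*} [DecidableEq μ] (Uf : μ → Matrix s s ℂ) : Matrix (μ × s) (μ × s) ℂ :=
  Matrix.of fun p q => if p.1 = q.1 then Uf p.1 p.2 q.2 else 0

def extendMap {n m : Type*} [Fintype n] [DecidableEq n]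
    (E : Matrix n n ℂ →ₗ[ℂ] Matrix n n ℂ) (ρ : Matrix (n × m) (n × m) ℂ) :
    Matrix (n × m) (n × m) ℂ :=
  Matrix.of fun p q => E (Matrix.of fun i j => ρ (i, p.2) (j, q.2)) p.1 q.1

def IsCP {n : Type*} [Fintype n] [DecidableEq n]
    (E : Matrix n n ℂ →ₗ[ℂ] Matrix n n ℂ) : Prop :=
  ∀ (k : ℕ) (ρ : Matrix (n × Fin k) (n × Fin k) ℂ), ρ.PosSemidef → (extendMap E ρ).PosSemidef

def IsTP {n : Type*} [Fintype n] [DecidableEq n]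
    (E : Matrix n n ℂ →ₗ[ℂ] Matrix n n ℂ) : Prop :=
  ∀ ρ, (E ρ).trace = ρ.trace

noncomputable def mlog {n : Type*} [Fintype n] [DecidableEq n] (ρ : Matrix n n ℂ) :
    Matrix n n ℂ :=
  if h : ρ.IsHermitian then
    (h.eigenvectorUnitary : Matrix n n ℂ) *
      Matrix.diagonal (fun i => (Real.log (h.eigenvalues i) : ℂ)) *
      (h.eigenvectorUnitary : Matrix n n ℂ)ᴴ
  else 0

noncomputable def relEntropy {n : Type*} [Fintype n] [DecidableEq n]
    (ρ ω : Matrix n n ℂ) : ℝ :=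
  ((ρ * (mlog ρ - mlog ω)).trace).re

structure RepeatableImpl {s : Type*} [Fintype s] [DecidableEq s]
    (E : Matrix s s ℂ → Matrix s s ℂ) where
  μ : Type
  [finμ : Fintype μ]
  [decμ : DecidableEq μ]
  U : Matrix (μ × s) (μ × s) ℂ
  ξ : Matrix μ μ ℂ
  unitary : IsUnitary U
  density : IsDensity ξ
  repeats : ∀ (ρs : ℕ → Matrix s s ℂ), (∀ k, IsDensity (ρs k)) →
    ∀ (ξseq : ℕ → Matrix μ μ ℂ), ξseq 0 = ξ →
      (∀ k, ξseq (k + 1) = memUpdate U (ξseq k) (ρs k)) →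
      ∀ n (ρ : Matrix s s ℂ), IsDensity ρ → inducedChan U (ξseq n) ρ = E ρ

set_option linter.unusedSectionVars false

section Aux

noncomputable def fro {m m' : Type*} [Fintype m] [Fintype m'] (X : Matrix m m' ℂ) : ℝ :=
  ∑ p, ∑ q, Complex.normSq (X p q)

lemma fro_nonneg {m m' : Type*} [Fintype m] [Fintype m'] (X : Matrix m m' ℂ) : 0 ≤ fro X :=
  Finset.sum_nonneg fun _ _ => Finset.sum_nonneg fun _ _ => Complex.normSq_nonneg _

lemma fro_eq_zero {m m' : Type*} [Fintype m] [Fintype m'] {X : Matrix m m' ℂ}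
    (h : fro X = 0) : X = 0 := by
  ext p q
  have h1 : ∀ p ∈ Finset.univ, (0:ℝ) ≤ ∑ q, Complex.normSq (X p q) :=
    fun _ _ => Finset.sum_nonneg fun _ _ => Complex.normSq_nonneg _
  have h2 := (Finset.sum_eq_zero_iff_of_nonneg h1).1 h p (Finset.mem_univ p)
  have h3 := (Finset.sum_eq_zero_iff_of_nonneg
    (fun _ _ => Complex.normSq_nonneg _)).1 h2 q (Finset.mem_univ q)
  simpa [Complex.normSq_eq_zero] using h3

lemma fro_cast {m m' : Type*} [Fintype m] [Fintype m'] (X : Matrix m m' ℂ) :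
    ((fro X : ℝ) : ℂ) = (Xᴴ * X).trace := by
  simp only [fro, trace, Matrix.mul_apply, conjTranspose_apply, diag_apply]
  push_cast
  rw [Finset.sum_comm]
  congr 1; ext p; congr 1; ext q
  simp [Complex.normSq_eq_conj_mul_self]

variable {μ s : Type*} [Fintype μ] [Fintype s] [DecidableEq μ] [DecidableEq s]

lemma fro_kron (A : Matrix μ μ ℂ) (B : Matrix s s ℂ) :
    fro (A ⊗ₖ B) = fro A * fro B := by
  simp only [fro, kroneckerMap_apply, Complex.normSq_mul, Fintype.sum_prod_type]
  rw [Finset.sum_mul_sum Finset.univ Finset.univ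
    (fun a => ∑ b, Complex.normSq (A a b)) (fun i => ∑ j, Complex.normSq (B i j))]
  refine Finset.sum_congr rfl fun a _ => Finset.sum_congr rfl fun i _ => ?_
  exact (Finset.sum_mul_sum Finset.univ Finset.univ
    (fun b => Complex.normSq (A a b)) (fun j => Complex.normSq (B i j))).symm

lemma fro_smul (c : ℂ) (X : Matrix μ μ ℂ) : fro (c • X) = Complex.normSq c * fro X := by
  simp [fro, Complex.normSq_mul, Finset.mul_sum]

lemma fro_one : fro (1 : Matrix s s ℂ) = (Fintype.card s : ℝ) := by
  simp only [fro, one_apply, apply_ite Complex.normSq, Complex.normSq_one,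
    Complex.normSq_zero, Finset.sum_ite_eq, Finset.mem_univ, if_true]
  simp

lemma fro_unitary_conj {U : Matrix (μ × s) (μ × s) ℂ} (hU : Uᴴ * U = 1)
    (M : Matrix (μ × s) (μ × s) ℂ) :
    fro (U * M * Uᴴ) = fro M := by
  have key : ((fro (U * M * Uᴴ) : ℝ) : ℂ) = ((fro M : ℝ) : ℂ) := by
    rw [fro_cast, fro_cast]
    have h1 : (U * M * Uᴴ)ᴴ = U * Mᴴ * Uᴴ := by
      simp [conjTranspose_mul, Matrix.mul_assoc]
    rw [h1]
    have h2 : Uᴴ * (U * M) = M := by rw [← Matrix.mul_assoc, hU, Matrix.one_mul]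
    have h3 : U * Mᴴ * Uᴴ * (U * M * Uᴴ) = U * (Mᴴ * M) * Uᴴ := by
      rw [Matrix.mul_assoc (U * Mᴴ), ← Matrix.mul_assoc Uᴴ (U * M) Uᴴ, h2,
        Matrix.mul_assoc U Mᴴ (M * Uᴴ), ← Matrix.mul_assoc Mᴴ M Uᴴ, ← Matrix.mul_assoc]
    rw [h3, Matrix.trace_mul_cycle, ← Matrix.mul_assoc, hU, Matrix.one_mul]
  exact_mod_cast key

lemma trace_mul_kron_one (X : Matrix (μ × s) (μ × s) ℂ) (A : Matrix μ μ ℂ) :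
    (X * (A ⊗ₖ (1 : Matrix s s ℂ))).trace = (ptraceSys X * A).trace := by
  simp only [trace, diag_apply, Matrix.mul_apply, ptraceSys, of_apply,
    Fintype.sum_prod_type, kroneckerMap_apply, one_apply, mul_ite, mul_one, mul_zero,
    Finset.sum_ite_eq', Finset.mem_univ, if_true, Finset.sum_mul]
  refine Finset.sum_congr rfl fun a _ => ?_
  rw [Finset.sum_comm]

lemma kron_conjTranspose (A : Matrix μ μ ℂ) (B : Matrix s s ℂ) :
    (A ⊗ₖ B)ᴴ = Aᴴ ⊗ₖ Bᴴ := by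
  ext p q
  simp [conjTranspose_apply, kroneckerMap_apply]

lemma trace_ptraceSys (X : Matrix (μ × s) (μ × s) ℂ) :
    (ptraceSys X).trace = X.trace := by
  simp [ptraceSys, trace, Fintype.sum_prod_type]

lemma ptraceMem_kron (A : Matrix μ μ ℂ) (B : Matrix s s ℂ) :
    ptraceMem (A ⊗ₖ B) = A.trace • B := by
  ext i j
  simp [ptraceMem, trace, Finset.sum_mul]

lemma ptraceMem_sub (X Y : Matrix (μ × s) (μ × s) ℂ) :
    ptraceMem (X - Y) = ptraceMem X - ptraceMem Y := by
  ext i j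
  simp [ptraceMem, Finset.sum_sub_distrib]

lemma fro_ptraceMem_le (X : Matrix (μ × s) (μ × s) ℂ) :
    fro (ptraceMem X) ≤ (Fintype.card μ : ℝ) * fro X := by
  have step1 : fro (ptraceMem X) ≤
      (Fintype.card μ : ℝ) * ∑ i, ∑ j, ∑ a, Complex.normSq (X (a, i) (a, j)) := by
    rw [Finset.mul_sum]
    refine Finset.sum_le_sum fun i _ => ?_
    rw [Finset.mul_sum]
    refine Finset.sum_le_sum fun j _ => ?_
    have h1 : Complex.normSq (ptraceMem X i j) ≤ (∑ a, ‖X (a, i) (a, j)‖) ^ 2 := by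
      rw [← Complex.sq_norm]
      have habs : ‖ptraceMem X i j‖ ≤ ∑ a, ‖X (a, i) (a, j)‖ := by
        have := norm_sum_le (Finset.univ : Finset μ) (fun a => X (a, i) (a, j))
        simpa [ptraceMem] using this
      exact pow_le_pow_left₀ (norm_nonneg _) habs 2
    have h2 : (∑ a, ‖X (a, i) (a, j)‖) ^ 2 ≤
        (Fintype.card μ : ℝ) * ∑ a, ‖X (a, i) (a, j)‖ ^ 2 := by
      simpa using sq_sum_le_card_mul_sum_sq
        (s := (Finset.univ : Finset μ)) (f := fun a => ‖X (a, i) (a, j)‖)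
    simp only [Complex.sq_norm] at h2
    exact h1.trans h2
  refine step1.trans (mul_le_mul_of_nonneg_left ?_ (Nat.cast_nonneg _))
  have expand : fro X = ∑ a, ∑ b, ∑ i, ∑ j, Complex.normSq (X (a, i) (b, j)) := by
    simp only [fro, Fintype.sum_prod_type]
    refine Finset.sum_congr rfl fun a _ => ?_
    rw [Finset.sum_comm]
  rw [expand]
  have key : ∀ a : μ, ∑ i, ∑ j, Complex.normSq (X (a, i) (a, j)) ≤
      ∑ b, ∑ i, ∑ j, Complex.normSq (X (a, i) (b, j)) := by
    intro a
    refine Finset.single_le_sum (f := fun b => ∑ i, ∑ j, Complex.normSq (X (a, i) (b, j)))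
      (fun b _ => Finset.sum_nonneg fun _ _ => Finset.sum_nonneg fun _ _ =>
        Complex.normSq_nonneg _) (Finset.mem_univ a)
  calc ∑ i, ∑ j, ∑ a, Complex.normSq (X (a, i) (a, j))
      = ∑ i, ∑ a, ∑ j, Complex.normSq (X (a, i) (a, j)) :=
        Finset.sum_congr rfl fun i _ => Finset.sum_comm
    _ = ∑ a, ∑ i, ∑ j, Complex.normSq (X (a, i) (a, j)) := Finset.sum_comm
    _ ≤ ∑ a, ∑ b, ∑ i, ∑ j, Complex.normSq (X (a, i) (b, j)) := Finset.sum_le_sum fun a _ => key a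

lemma fro_sub_kron_ptraceSys (X : Matrix (μ × s) (μ × s) ℂ) :
    fro (X - ptraceSys X ⊗ₖ (((Fintype.card s : ℂ))⁻¹ • (1 : Matrix s s ℂ))) =
      fro X - fro (ptraceSys X) / (Fintype.card s : ℝ) := by
  set d : ℕ := Fintype.card s with hd
  set c : ℂ := ((d : ℂ))⁻¹ with hc
  set A : Matrix μ μ ℂ := ptraceSys X with hA
  set τ : Matrix (μ × s) (μ × s) ℂ := A ⊗ₖ (c • (1 : Matrix s s ℂ)) with hτ
  have hcstar : star c = c := by
    rw [hc, star_inv₀]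
    norm_cast
  have hτH : τᴴ = Aᴴ ⊗ₖ (c • (1 : Matrix s s ℂ)) := by
    rw [hτ, kron_conjTranspose, conjTranspose_smul, hcstar, conjTranspose_one]
  -- ⟨τ, X⟩ = fro A / d
  have hinner : (τᴴ * X).trace = c * ((fro A : ℝ) : ℂ) := by
    rw [hτH, kronecker_smul, Matrix.smul_mul, trace_smul, smul_eq_mul]
    congr 1
    rw [Matrix.trace_mul_comm, trace_mul_kron_one, ← hA, Matrix.trace_mul_comm, ← fro_cast]
  have hinner' : (Xᴴ * τ).trace = c * ((fro A : ℝ) : ℂ) := by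
    have : Xᴴ * τ = (τᴴ * X)ᴴ := by
      rw [conjTranspose_mul, conjTranspose_conjTranspose]
    rw [this, trace_conjTranspose, hinner, star_mul', hcstar]
    rw [Complex.star_def, Complex.conj_ofReal, mul_comm]
  have hττ : (τᴴ * τ).trace = ((fro A : ℝ) : ℂ) * ((Complex.normSq c * d : ℝ) : ℂ) := by
    rw [← fro_cast, hτ, fro_kron, fro_smul, fro_one]
    push_cast
    ring
  have key : ((fro (X - τ) : ℝ) : ℂ) =
      ((fro X : ℝ) : ℂ) - c * ((fro A : ℝ) : ℂ) - c * ((fro A : ℝ) : ℂ)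
        + ((fro A : ℝ) : ℂ) * ((Complex.normSq c * d : ℝ) : ℂ) := by
    rw [fro_cast, conjTranspose_sub, Matrix.sub_mul, Matrix.mul_sub, Matrix.mul_sub]
    simp only [trace_sub]
    rw [hinner, hinner', hττ, ← fro_cast]
    ring
  -- convert to reals
  have hcre : c = ((((d:ℝ))⁻¹ : ℝ) : ℂ) := by
    rw [hc]
    push_cast
    ring
  rw [hcre] at key
  simp only [Complex.normSq_ofReal] at key
  have keyR : fro (X - τ) = fro X - ((d:ℝ))⁻¹ * fro A - ((d:ℝ))⁻¹ * fro A
      + fro A * (((d:ℝ))⁻¹ * ((d:ℝ))⁻¹ * ((d:ℝ))) := by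
    exact_mod_cast key
  rw [keyR]
  rcases Nat.eq_zero_or_pos d with h0 | hpos
  · simp [h0]
  · have hd0 : (d : ℝ) ≠ 0 := Nat.cast_ne_zero.2 hpos.ne'
    field_simp
    ring

end Aux

theorem repeatable_implies_unital
    {s : Type*} [Fintype s] [DecidableEq s] [Nonempty s]
    (E : Matrix s s ℂ →ₗ[ℂ] Matrix s s ℂ)
    (hCP : IsCP E) (hTP : IsTP E)
    (hrep : Nonempty (RepeatableImpl (fun ρ => E ρ))) :
    E 1 = 1 := by
  obtain ⟨impl⟩ := hrep
  letI : Fintype impl.μ := impl.finμ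
  letI : DecidableEq impl.μ := impl.decμ
  have hd0 : 0 < Fintype.card s := Fintype.card_pos
  have hdR : ((Fintype.card s : ℝ)) ≠ 0 := Nat.cast_ne_zero.2 hd0.ne'
  have hdC : ((Fintype.card s : ℂ)) ≠ 0 := Nat.cast_ne_zero.2 hd0.ne'
  set ρ0 : Matrix s s ℂ := ((Fintype.card s : ℂ))⁻¹ • 1 with hρ0
  have hρ0tr : ρ0.trace = 1 := by
    rw [hρ0, trace_smul, trace_one, smul_eq_mul, inv_mul_cancel₀ hdC]
  have hρ0dens : IsDensity ρ0 := by
    refine ⟨⟨?_, ?_⟩, hρ0tr⟩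
    · rw [Matrix.IsHermitian, hρ0, Matrix.conjTranspose_smul, Matrix.conjTranspose_one]
      congr 1
      rw [star_inv₀]
      norm_cast
    · intro x
      rw [hρ0]
      have h1 : (0:ℂ) ≤ ((Fintype.card s : ℂ))⁻¹ := by
        have h2 : ((Fintype.card s : ℂ))⁻¹ = ((((Fintype.card s : ℝ))⁻¹ : ℝ) : ℂ) := by
          rw [Complex.ofReal_inv, Complex.ofReal_natCast]
        rw [h2, Complex.zero_le_real]
        positivity
      exact (Matrix.PosDef.one.posSemidef.smul h1).2 x
  have hfρ0 : fro ρ0 = ((Fintype.card s : ℝ))⁻¹ := by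
    rw [hρ0, fro_smul, fro_one]
    rw [show Complex.normSq ((Fintype.card s : ℂ))⁻¹
        = ((Fintype.card s : ℝ))⁻¹ * ((Fintype.card s : ℝ))⁻¹ by
      rw [show ((Fintype.card s : ℂ))⁻¹ = ((((Fintype.card s : ℝ))⁻¹ : ℝ) : ℂ) by
        rw [Complex.ofReal_inv, Complex.ofReal_natCast], Complex.normSq_ofReal]]
    field_simp
  -- the orbit of the memory under repeated maximally mixed inputs
  let ξseq : ℕ → Matrix impl.μ impl.μ ℂ := fun n =>
    Nat.rec impl.ξ (fun _ ξk => memUpdate impl.U ξk ρ0) n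
  have hchan : ∀ n, inducedChan impl.U (ξseq n) ρ0 = E ρ0 := fun n =>
    impl.repeats (fun _ => ρ0) (fun _ => hρ0dens) ξseq rfl (fun _ => rfl) n ρ0 hρ0dens
  have htr : ∀ n, (ξseq n).trace = 1 := by
    intro n
    induction n with
    | zero => exact impl.density.2
    | succ k ih =>
        show (memUpdate impl.U (ξseq k) ρ0).trace = 1
        rw [memUpdate, trace_ptraceSys, Matrix.trace_mul_cycle,
          impl.unitary.2, Matrix.one_mul, trace_kronecker, ih, hρ0tr, mul_one]
  set p : ℕ → ℝ := fun n => fro (ξseq n) with hp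
  set D : Matrix s s ℂ := E ρ0 - ρ0 with hD
  set cμ : ℝ := (Fintype.card impl.μ : ℝ) with hcμ
  have hcμ0 : 0 ≤ cμ := Nat.cast_nonneg _
  -- the per-step bound
  have hstep : ∀ k, (Fintype.card s : ℝ) * fro D ≤ cμ * (p k - p (k + 1)) := by
    intro k
    set σ : Matrix (impl.μ × s) (impl.μ × s) ℂ := impl.U * (ξseq k ⊗ₖ ρ0) * impl.Uᴴ with hσ
    have hfσ : fro σ = p k * fro ρ0 := by
      rw [hσ, fro_unitary_conj impl.unitary.2, fro_kron]
    have hPS : ptraceSys σ = ξseq (k + 1) := rfl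
    have hkey := fro_sub_kron_ptraceSys σ
    rw [hPS, ← hρ0, hfσ, hfρ0] at hkey
    have hDeq : D = ptraceMem (σ - ξseq (k + 1) ⊗ₖ ρ0) := by
      rw [ptraceMem_sub, ptraceMem_kron, htr (k + 1), one_smul, hD]
      congr 1
      exact (hchan k).symm
    have hb := fro_ptraceMem_le (σ - ξseq (k + 1) ⊗ₖ ρ0)
    rw [← hDeq, hkey] at hb
    have hb2 : fro D ≤ cμ * ((p k - p (k + 1)) / (Fintype.card s : ℝ)) := by
      refine hb.trans (le_of_eq ?_)
      congr 1
      field_simp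
      rfl
    calc (Fintype.card s : ℝ) * fro D
        ≤ (Fintype.card s : ℝ) * (cμ * ((p k - p (k + 1)) / (Fintype.card s : ℝ))) := by
          exact mul_le_mul_of_nonneg_left hb2 (Nat.cast_nonneg _)
      _ = cμ * (p k - p (k + 1)) := by field_simp
  -- telescoping
  have hsum : ∀ n : ℕ, (n : ℝ) * ((Fintype.card s : ℝ) * fro D) ≤ cμ * p 0 := by
    intro n
    have h1 : ∑ _k ∈ Finset.range n, (Fintype.card s : ℝ) * fro D ≤
        ∑ k ∈ Finset.range n, cμ * (p k - p (k + 1)) :=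
      Finset.sum_le_sum fun k _ => hstep k
    rw [Finset.sum_const, Finset.card_range, nsmul_eq_mul, ← Finset.mul_sum,
      Finset.sum_range_sub' p] at h1
    refine h1.trans ?_
    have : p 0 - p n ≤ p 0 := by
      have := fro_nonneg (ξseq n)
      simp only [hp]
      linarith
    exact mul_le_mul_of_nonneg_left this hcμ0
  have hfroD : fro D = 0 := by
    by_contra h
    have hpos : 0 < fro D := lt_of_le_of_ne (fro_nonneg D) (Ne.symm h)
    have hcpos : 0 < (Fintype.card s : ℝ) * fro D :=
      mul_pos (by exact_mod_cast hd0) hpos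
    obtain ⟨n, hn⟩ := exists_nat_gt ((cμ * p 0) / ((Fintype.card s : ℝ) * fro D))
    have h2 : cμ * p 0 < (n : ℝ) * ((Fintype.card s : ℝ) * fro D) :=
      (div_lt_iff₀ hcpos).1 hn
    exact absurd (hsum n) (not_le.2 h2)
  have hEρ0 : E ρ0 = ρ0 := by
    have h0 := fro_eq_zero hfroD
    rw [hD, sub_eq_zero] at h0
    exact h0
  have h1 : (1 : Matrix s s ℂ) = (Fintype.card s : ℂ) • ρ0 := by
    rw [hρ0, smul_smul, mul_inv_cancel₀ hdC, one_smul]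
  rw [h1, _root_.map_smul, hEρ0, ← h1]
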